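/- Let S be a finite 2-group of nilpotency class two and let P be a normal subgroup of S isomorphic to the dihedral group of order 8. Then S = P · C_S(P), i.e., every element of S is a product of an element of P and an element centralizing P. -/

import Mathlib

open scoped commutatorElement

open DihedralGroup in
private lemma d8key : ∀ ζ₁ ζ₂ : DihedralGroup 4, ζ₁ * r 1 = r 1 * ζ₁ → ζ₁ * sr 0 = sr 0 * ζ₁ →
    ζ₂ * r 1 = r 1 * ζ₂ → ζ₂ * sr 0 = sr 0 * ζ₂ →
    ∃ g₀ : DihedralGroup 4, g₀ * r 1 * g₀⁻¹ = ζ₁ * r 1 ∧ g₀ * sr 0 * g₀⁻¹ = ζ₂ * sr 0 := by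
  decide

/-- Let `S` be a finite `2`-group of nilpotency class two and let
`P ⊴ S` with `P ≅ Dih(8)`. Then `S = P · C_S(P)`. -/
theorem stmt_1 {S : Type*} [Group S] [Finite S] (hS : IsPGroup 2 S)
    (hclass2 : commutator S ≤ Subgroup.center S) (hnonab : commutator S ≠ ⊥)
    (P : Subgroup S) (hP : P.Normal) (hDih : Nonempty (P ≃* DihedralGroup 4)) :
    ∀ x : S, ∃ p ∈ P, ∃ c ∈ Subgroup.centralizer (P : Set S), x = p * c := by
  obtain ⟨e⟩ := hDih
  set A : P := e.symm (DihedralGroup.r 1) with hA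
  set B : P := e.symm (DihedralGroup.sr 0) with hB
  set a : S := (A : S)
  set b : S := (B : S)
  have heA : e A = DihedralGroup.r 1 := e.apply_symm_apply _
  have heB : e B = DihedralGroup.sr 0 := e.apply_symm_apply _
  -- P is generated by a and b
  have hPcl : P = Subgroup.closure {a, b} := by
    apply le_antisymm
    · intro q hq
      have key : ∀ g : DihedralGroup 4, ((e.symm g : P) : S) ∈ Subgroup.closure {a, b} := by
        intro g
        have ha : a ∈ Subgroup.closure {a, b} :=
          Subgroup.subset_closure (by simp)
        have hb : b ∈ Subgroup.closure {a, b} :=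
          Subgroup.subset_closure (by simp)
        cases g with
        | r i =>
            have : DihedralGroup.r i = (DihedralGroup.r 1 : DihedralGroup 4) ^ i.val := by
              rw [DihedralGroup.r_one_pow]
              congr 1
              simp [ZMod.natCast_val, ZMod.cast_id]
            rw [this, map_pow]
            push_cast
            exact pow_mem ha _
        | sr i =>
            have : DihedralGroup.sr i =
                (DihedralGroup.sr 0 : DihedralGroup 4) * (DihedralGroup.r 1) ^ i.val := by
              rw [DihedralGroup.r_one_pow, DihedralGroup.sr_mul_r]
              congr 1
              simp [ZMod.natCast_val, ZMod.cast_id]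
            rw [this, map_mul, map_pow]
            push_cast
            exact mul_mem hb (pow_mem ha _)
      have : q = ((e.symm (e ⟨q, hq⟩) : P) : S) := by rw [e.symm_apply_apply]
      rw [this]; exact key _
    · rw [Subgroup.closure_le]
      rintro q (rfl | rfl) <;> simp [a, b]
  intro x
  -- commutators of x with elements of P lie in P ∩ Z(S)
  have hcomm : ∀ q : P, ∃ hz : ⁅x, (q : S)⁆ ∈ P,
      (⟨⁅x, (q : S)⁆, hz⟩ : P) * A = A * ⟨⁅x, (q : S)⁆, hz⟩ ∧
      (⟨⁅x, (q : S)⁆, hz⟩ : P) * B = B * ⟨⁅x, (q : S)⁆, hz⟩ := by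
    intro q
    have hzP : ⁅x, (q : S)⁆ ∈ P := by
      have h1 : x * (q : S) * x⁻¹ ∈ P := hP.conj_mem _ q.2 _
      have : ⁅x, (q : S)⁆ = (x * (q : S) * x⁻¹) * (q : S)⁻¹ := by
        rw [commutatorElement_def]
      rw [this]; exact mul_mem h1 (inv_mem q.2)
    have hzC : ⁅x, (q : S)⁆ ∈ Subgroup.center S := by
      apply hclass2
      rw [commutator_def]
      exact Subgroup.commutator_mem_commutator (Subgroup.mem_top _) (Subgroup.mem_top _)
    refine ⟨hzP, ?_, ?_⟩ <;>
    · ext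
      exact (Subgroup.mem_center_iff.mp hzC _).symm
  obtain ⟨hz₁P, hz₁A, hz₁B⟩ := hcomm A
  obtain ⟨hz₂P, hz₂A, hz₂B⟩ := hcomm B
  set Z₁ : P := ⟨⁅x, a⁆, hz₁P⟩
  set Z₂ : P := ⟨⁅x, b⁆, hz₂P⟩
  -- transport to DihedralGroup 4 and use d8key
  obtain ⟨g₀, hg₁, hg₂⟩ := d8key (e Z₁) (e Z₂)
    (by rw [← heA, ← map_mul, ← map_mul, hz₁A])
    (by rw [← heB, ← map_mul, ← map_mul, hz₁B])
    (by rw [← heA, ← map_mul, ← map_mul, hz₂A])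
    (by rw [← heB, ← map_mul, ← map_mul, hz₂B])
  set P₀ : P := e.symm g₀ with hP₀
  set p₀ : S := (P₀ : S)
  -- conjugation by p₀ agrees with conjugation by x on the generators
  have hconjA : p₀ * a * p₀⁻¹ = x * a * x⁻¹ := by
    have h1 : P₀ * A * P₀⁻¹ = Z₁ * A := by
      apply e.injective
      simp only [map_mul, map_inv, heA, hP₀, e.apply_symm_apply]
      exact hg₁
    have h2 : x * a * x⁻¹ = ⁅x, a⁆ * a := by group
    calc p₀ * a * p₀⁻¹ = ((P₀ * A * P₀⁻¹ : P) : S) := by push_cast; rfl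
      _ = ((Z₁ * A : P) : S) := by rw [h1]
      _ = ⁅x, a⁆ * a := by push_cast; rfl
      _ = x * a * x⁻¹ := h2.symm
  have hconjB : p₀ * b * p₀⁻¹ = x * b * x⁻¹ := by
    have h1 : P₀ * B * P₀⁻¹ = Z₂ * B := by
      apply e.injective
      simp only [map_mul, map_inv, heB, hP₀, e.apply_symm_apply]
      exact hg₂
    have h2 : x * b * x⁻¹ = ⁅x, b⁆ * b := by group
    calc p₀ * b * p₀⁻¹ = ((P₀ * B * P₀⁻¹ : P) : S) := by push_cast; rfl
      _ = ((Z₂ * B : P) : S) := by rw [h1]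
      _ = ⁅x, b⁆ * b := by push_cast; rfl
      _ = x * b * x⁻¹ := h2.symm
  -- hence on all of P
  have hconj : ∀ q ∈ P, p₀ * q * p₀⁻¹ = x * q * x⁻¹ := by
    rw [hPcl]
    intro q hq
    induction hq using Subgroup.closure_induction with
    | mem q hq => rcases hq with rfl | rfl; exacts [hconjA, hconjB]
    | one => group
    | mul q r _ _ hq hr =>
        have : p₀ * (q * r) * p₀⁻¹ = (p₀ * q * p₀⁻¹) * (p₀ * r * p₀⁻¹) := by group
        rw [this, hq, hr]; group
    | inv q _ hq =>
        have : p₀ * q⁻¹ * p₀⁻¹ = (p₀ * q * p₀⁻¹)⁻¹ := by group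
        rw [this, hq]; group
  refine ⟨p₀, P₀.2, p₀⁻¹ * x, ?_, by group⟩
  rw [Subgroup.mem_centralizer_iff]
  intro q hq
  have h := hconj q hq
  have : q = p₀⁻¹ * (x * q * x⁻¹) * p₀ := by rw [← h]; group
  calc q * (p₀⁻¹ * x) = (p₀⁻¹ * (x * q * x⁻¹) * p₀) * (p₀⁻¹ * x) := by rw [← this]
    _ = (p₀⁻¹ * x) * q := by group
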